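/- Let T : Matrix (Fin n) (Fin n) ℂ →ₗ Matrix (Fin m) (Fin m) ℂ be a completely positive linear map, and let x, y ∈ Matrix (Fin n) (Fin n) ℂ. Then ‖T(x·y)‖ ≤ ‖T(x·x*)‖^(1/2) · ‖T(y*·y)‖^(1/2), where ‖·‖ is the operator norm. -/

import Mathlib

open Matrix
open scoped ComplexOrder

open scoped Matrix.Norms.L2Operator

/-- `T` is completely positive: for every `k`, the amplification `id_{M_k} ⊗ T` maps positive
semidefinite matrices to positive semidefinite matrices. -/
def IsCompletelyPositive {n m : ℕ}
    (T : Matrix (Fin n) (Fin n) ℂ →ₗ[ℂ] Matrix (Fin m) (Fin m) ℂ) : Prop :=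
  ∀ (k : ℕ) (M : Matrix (Fin k × Fin n) (Fin k × Fin n) ℂ), M.PosSemidef →
    Matrix.PosSemidef (fun p q : Fin k × Fin m =>
      T (fun a b => M (p.1, a) (q.1, b)) p.2 q.2)

lemma qf_bound {m : ℕ} (A : Matrix (Fin m) (Fin m) ℂ) (u : Fin m → ℂ) :
    (star u ⬝ᵥ A *ᵥ u).re ≤ ‖A‖ * ‖(WithLp.equiv 2 (Fin m → ℂ)).symm u‖ ^ 2 := by
  set U := (WithLp.equiv 2 (Fin m → ℂ)).symm u with hU
  have h1 : star u ⬝ᵥ A *ᵥ u = inner (𝕜 := ℂ) U ((WithLp.equiv 2 (Fin m → ℂ)).symm (A *ᵥ u)) :=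
    by rw [dotProduct_comm]; rfl
  have h2 : (star u ⬝ᵥ A *ᵥ u).re ≤ ‖star u ⬝ᵥ A *ᵥ u‖ := Complex.re_le_norm _
  have h3 : ‖star u ⬝ᵥ A *ᵥ u‖ ≤ ‖U‖ * ‖(WithLp.equiv 2 (Fin m → ℂ)).symm (A *ᵥ u)‖ := by
    rw [h1]
    exact norm_inner_le_norm (𝕜 := ℂ) U _
  have h4 : ‖(WithLp.equiv 2 (Fin m → ℂ)).symm (A *ᵥ u)‖ ≤ ‖A‖ * ‖U‖ := by
    have := A.l2_opNorm_mulVec U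
    exact this
  have h5 : (0:ℝ) ≤ ‖U‖ := norm_nonneg _
  nlinarith [norm_nonneg A]

lemma entry_cs {m : ℕ} (N : Matrix (Fin 2 × Fin m) (Fin 2 × Fin m) ℂ) (hN : N.PosSemidef)
    (u v : Fin m → ℂ) :
    ‖star u ⬝ᵥ (Matrix.of fun a b => N (0, a) (1, b)) *ᵥ v‖ ^ 2 ≤
      (star u ⬝ᵥ (Matrix.of fun a b => N (0, a) (0, b)) *ᵥ u).re *
        (star v ⬝ᵥ (Matrix.of fun a b => N (1, a) (1, b)) *ᵥ v).re := by
  set w0 : Fin 2 × Fin m → ℂ := fun p => if p.1 = 0 then u p.2 else 0 with hw0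
  set w1 : Fin 2 × Fin m → ℂ := fun p => if p.1 = 0 then 0 else v p.2 with hw1
  set uAu := star u ⬝ᵥ (Matrix.of fun a b => N (0, a) (0, b)) *ᵥ u with huAu
  set uBv := star u ⬝ᵥ (Matrix.of fun a b => N (0, a) (1, b)) *ᵥ v with huBv
  set vCv := star v ⬝ᵥ (Matrix.of fun a b => N (1, a) (1, b)) *ᵥ v with hvCv
  have e00 : star w0 ⬝ᵥ N *ᵥ w0 = uAu := by
    simp only [hw0, huAu, dotProduct, mulVec, Fintype.sum_prod_type, Fin.sum_univ_two,
      Pi.star_apply, of_apply]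
    simp
  have e01 : star w0 ⬝ᵥ N *ᵥ w1 = uBv := by
    simp only [hw0, hw1, huBv, dotProduct, mulVec, Fintype.sum_prod_type, Fin.sum_univ_two,
      Pi.star_apply, of_apply]
    simp
  have e11 : star w1 ⬝ᵥ N *ᵥ w1 = vCv := by
    simp only [hw1, hvCv, dotProduct, mulVec, Fintype.sum_prod_type, Fin.sum_univ_two,
      Pi.star_apply, of_apply]
    simp
  -- hermitian conjugation
  have e10 : star w1 ⬝ᵥ N *ᵥ w0 = (starRingEnd ℂ) uBv := by
    rw [← e01]
    have herm : ∀ p q, N q p = (starRingEnd ℂ) (N p q) := fun p q => (hN.1.apply q p).symm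
    simp only [dotProduct, mulVec, dotProduct, Pi.star_apply, map_sum, _root_.map_mul, Finset.mul_sum]
    rw [Finset.sum_comm]
    refine Finset.sum_congr rfl fun p _ => Finset.sum_congr rfl fun q _ => ?_
    rw [herm p q]
    simp only [RCLike.star_def, RingHomCompTriple.comp_apply, RingHom.id_apply]
    ring_nf
  -- expansion
  have expand : ∀ s : ℂ, star (w0 + s • w1) ⬝ᵥ N *ᵥ (w0 + s • w1)
      = uAu + s * uBv + (starRingEnd ℂ) s * ((starRingEnd ℂ) uBv)
        + (starRingEnd ℂ) s * s * vCv := by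
    intro s
    rw [← e00, ← e10, ← e01, ← e11]
    simp [star_add, star_smul, mulVec_add, mulVec_smul, add_dotProduct, dotProduct_add,
      smul_dotProduct, dotProduct_smul, smul_eq_mul]
    ring
  -- discriminant argument
  set b : ℝ := ‖uBv‖ with hb
  set c : ℂ := if uBv = 0 then 1 else (starRingEnd ℂ) uBv / (b : ℂ) with hc
  have hbnn : 0 ≤ b := norm_nonneg _
  have hc1 : c * uBv = (b : ℂ) := by
    by_cases h : uBv = 0
    · simp [hc, h, hb]
    · have hb0 : (b : ℂ) ≠ 0 := by
        simpa [hb] using norm_ne_zero_iff.mpr h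
      rw [hc, if_neg h, div_mul_eq_mul_div, mul_comm, Complex.mul_conj, div_eq_iff hb0]
      rw [hb, Complex.normSq_eq_norm_sq]
      push_cast
      ring
  have hc2 : (starRingEnd ℂ) c * c = 1 := by
    by_cases h : uBv = 0
    · simp [hc, h]
    · have habs : ‖c‖ = 1 := by
        rw [hc, if_neg h]
        rw [norm_div]
        simp [hb, norm_ne_zero_iff.mpr h]
      calc (starRingEnd ℂ) c * c = c * (starRingEnd ℂ) c := by ring
        _ = ((Complex.normSq c : ℝ) : ℂ) := Complex.mul_conj c
        _ = 1 := by rw [Complex.normSq_eq_norm_sq, habs]; norm_num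
  have quad : ∀ t : ℝ, 0 ≤ vCv.re * (t * t) + (-(2 * b)) * t + uAu.re := by
    intro t
    set s : ℂ := -(t : ℂ) * c with hs
    have h1 : s * uBv = ((-(t * b) : ℝ) : ℂ) := by
      rw [hs, mul_assoc, hc1]; push_cast; ring
    have h2 : (starRingEnd ℂ) s * (starRingEnd ℂ) uBv = ((-(t * b) : ℝ) : ℂ) := by
      rw [← _root_.map_mul, h1, Complex.conj_ofReal]
    have h3 : (starRingEnd ℂ) s * s = ((t ^ 2 : ℝ) : ℂ) := by
      rw [hs]
      have : (starRingEnd ℂ) (-(t : ℂ) * c) = -(t : ℂ) * (starRingEnd ℂ) c := by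
        rw [_root_.map_mul, map_neg, Complex.conj_ofReal]
      rw [this]
      calc -(t : ℂ) * (starRingEnd ℂ) c * (-(t : ℂ) * c)
          = (t : ℂ) * (t : ℂ) * ((starRingEnd ℂ) c * c) := by ring
        _ = ((t ^ 2 : ℝ) : ℂ) := by rw [hc2]; push_cast; ring
    have h0 := hN.dotProduct_mulVec_nonneg (w0 + s • w1)
    rw [expand s] at h0
    rw [h1, h2, h3] at h0
    have hre := (Complex.le_def.mp h0).1
    simp only [Complex.add_re, Complex.zero_re, Complex.ofReal_re, Complex.re_ofReal_mul] at hre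
    nlinarith [hre]
  have hd := discrim_le_zero quad
  rw [discrim] at hd
  nlinarith [hd, hbnn]

lemma real_aux (r a c vn s : ℝ) (hr : 0 ≤ r) (hvn : 0 ≤ vn) (hs : 0 ≤ s)
    (hs2 : s ^ 2 = a * c) (h : (r ^ 2) ^ 2 ≤ a * r ^ 2 * (c * vn ^ 2)) :
    r ≤ s * vn := by
  rcases eq_or_lt_of_le hr with h0 | h0
  · rw [← h0]; positivity
  · have heq : (s * vn * r) ^ 2 = a * r ^ 2 * (c * vn ^ 2) := by
      have : (s * vn * r) ^ 2 = s ^ 2 * (vn ^ 2 * r ^ 2) := by ring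
      rw [this, hs2]; ring
    have h1 : (r ^ 2) ^ 2 ≤ (s * vn * r) ^ 2 := by rw [heq]; exact h
    have h2 : r ^ 2 ≤ s * vn * r := by
      have h3 := Real.sqrt_le_sqrt h1
      rwa [Real.sqrt_sq (by positivity), Real.sqrt_sq (by positivity)] at h3
    have h4 : r * r ≤ (s * vn) * r := by nlinarith
    exact le_of_mul_le_mul_right h4 h0

lemma block_norm {m : ℕ} (N : Matrix (Fin 2 × Fin m) (Fin 2 × Fin m) ℂ) (hN : N.PosSemidef) :
    ‖(Matrix.of fun a b => N (0, a) (1, b))‖ ≤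
      Real.sqrt ‖(Matrix.of fun a b => N (0, a) (0, b))‖ *
        Real.sqrt ‖(Matrix.of fun a b => N (1, a) (1, b))‖ := by
  set A := Matrix.of fun a b => N (0, a) (0, b) with hA
  set B := Matrix.of fun a b => N (0, a) (1, b) with hB
  set C := Matrix.of fun a b => N (1, a) (1, b) with hC
  have hAnn : (0:ℝ) ≤ ‖A‖ := norm_nonneg _
  have hCnn : (0:ℝ) ≤ ‖C‖ := norm_nonneg _
  have hApsd : A.PosSemidef := by
    have := hN.submatrix (fun a : Fin m => ((0 : Fin 2), a))
    exact this
  have hCpsd : C.PosSemidef := by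
    have := hN.submatrix (fun a : Fin m => ((1 : Fin 2), a))
    exact this
  have key : ∀ v : EuclideanSpace ℂ (Fin m),
      ‖(WithLp.equiv 2 (Fin m → ℂ)).symm (B *ᵥ (WithLp.equiv 2 (Fin m → ℂ)) v)‖ ≤
        Real.sqrt ‖A‖ * Real.sqrt ‖C‖ * ‖v‖ := by
    intro v
    set v' := (WithLp.equiv 2 (Fin m → ℂ)) v with hv'
    set u : Fin m → ℂ := B *ᵥ v' with hu
    set U := (WithLp.equiv 2 (Fin m → ℂ)).symm u with hU
    have hVv : (WithLp.equiv 2 (Fin m → ℂ)).symm v' = v := by simp [hv']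
    have h1 := entry_cs N hN u v'
    rw [← hB, ← hA, ← hC] at h1
    have h2 := qf_bound A u
    rw [← hU] at h2
    have h3 := qf_bound C v'
    rw [hVv] at h3
    have h4 : star u ⬝ᵥ B *ᵥ v' = ((‖U‖ : ℂ)) ^ 2 := by
      have h4' : star u ⬝ᵥ u = inner (𝕜 := ℂ) U U :=
        by rw [dotProduct_comm]; rfl
      rw [← hu, h4', inner_self_eq_norm_sq_to_K]
      norm_num
    rw [h4] at h1
    have h5 : ‖((‖U‖ : ℂ)) ^ 2‖ = ‖U‖ ^ 2 := by
      rw [norm_pow, Complex.norm_real, Real.norm_eq_abs, abs_of_nonneg (norm_nonneg _)]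
    rw [h5] at h1
    have hAqnn : 0 ≤ (star u ⬝ᵥ A *ᵥ u).re := (Complex.le_def.mp (hApsd.dotProduct_mulVec_nonneg u)).1
    have hCqnn : 0 ≤ (star v' ⬝ᵥ C *ᵥ v').re := (Complex.le_def.mp (hCpsd.dotProduct_mulVec_nonneg v')).1
    have h6 : (‖U‖ ^ 2) ^ 2 ≤ ‖A‖ * ‖U‖ ^ 2 * (‖C‖ * ‖v‖ ^ 2) :=
      h1.trans (mul_le_mul h2 h3 hCqnn (mul_nonneg (norm_nonneg _) (sq_nonneg _)))
    have hs : (Real.sqrt ‖A‖ * Real.sqrt ‖C‖) ^ 2 = ‖A‖ * ‖C‖ := by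
      rw [mul_pow, Real.sq_sqrt hAnn, Real.sq_sqrt hCnn]
    exact real_aux ‖U‖ ‖A‖ ‖C‖ ‖v‖ _ (norm_nonneg _) (norm_nonneg _)
      (mul_nonneg (Real.sqrt_nonneg _) (Real.sqrt_nonneg _)) hs h6
  have hc : (0:ℝ) ≤ Real.sqrt ‖A‖ * Real.sqrt ‖C‖ :=
    mul_nonneg (Real.sqrt_nonneg _) (Real.sqrt_nonneg _)
  rw [Matrix.l2_opNorm_def]
  refine ContinuousLinearMap.opNorm_le_bound _ hc fun x => ?_
  have hx := key x
  simpa [Matrix.toEuclideanLin_apply] using hx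

/-- Cauchy–Schwarz inequality for completely positive maps: for a completely positive
`T : Mₙ(ℂ) → Mₘ(ℂ)` and `x, y ∈ Mₙ(ℂ)`,
`‖T(xy)‖ ≤ ‖T(xx*)‖^(1/2)·‖T(y*y)‖^(1/2)` in operator norm. -/
theorem cp_cauchy_schwarz {n m : ℕ}
    (T : Matrix (Fin n) (Fin n) ℂ →ₗ[ℂ] Matrix (Fin m) (Fin m) ℂ)
    (hT : IsCompletelyPositive T) (x y : Matrix (Fin n) (Fin n) ℂ) :
    ‖T (x * y)‖ ≤ ‖T (x * xᴴ)‖ ^ ((1 : ℝ) / 2) * ‖T (yᴴ * y)‖ ^ ((1 : ℝ) / 2) := by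
  set A' : Matrix (Fin 2 × Fin n) (Fin n) ℂ :=
    Matrix.of (fun p c => if p.1 = 0 then x p.2 c else yᴴ p.2 c) with hA'
  set M : Matrix (Fin 2 × Fin n) (Fin 2 × Fin n) ℂ := A' * A'ᴴ with hM
  have hMpsd : M.PosSemidef := Matrix.posSemidef_self_mul_conjTranspose A'
  have hN := hT 2 M hMpsd
  set N : Matrix (Fin 2 × Fin m) (Fin 2 × Fin m) ℂ :=
    fun p q => T (fun a b => M (p.1, a) (q.1, b)) p.2 q.2 with hNdef
  have h10 : ((1 : Fin 2) = 0) = False := by simp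
  have hB : (Matrix.of fun a b => N (0, a) (1, b)) = T (x * y) := by
    have hblk : (fun a b => M ((0 : Fin 2), a) ((1 : Fin 2), b)) = x * y := by
      funext a b
      simp [hM, hA', Matrix.mul_apply, Matrix.conjTranspose_apply, h10]
    ext a b
    show T (fun a b => M ((0 : Fin 2), a) ((1 : Fin 2), b)) a b = T (x * y) a b
    rw [hblk]
  have hA : (Matrix.of fun a b => N (0, a) (0, b)) = T (x * xᴴ) := by
    have hblk : (fun a b => M ((0 : Fin 2), a) ((0 : Fin 2), b)) = x * xᴴ := by
      funext a b
      simp [hM, hA', Matrix.mul_apply, Matrix.conjTranspose_apply]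
    ext a b
    show T (fun a b => M ((0 : Fin 2), a) ((0 : Fin 2), b)) a b = T (x * xᴴ) a b
    rw [hblk]
  have hC : (Matrix.of fun a b => N (1, a) (1, b)) = T (yᴴ * y) := by
    have hblk : (fun a b => M ((1 : Fin 2), a) ((1 : Fin 2), b)) = yᴴ * y := by
      funext a b
      simp [hM, hA', Matrix.mul_apply, Matrix.conjTranspose_apply, h10]
    ext a b
    show T (fun a b => M ((1 : Fin 2), a) ((1 : Fin 2), b)) a b = T (yᴴ * y) a b
    rw [hblk]
  have key := block_norm N hN
  rw [hA, hB, hC] at key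
  rw [← Real.sqrt_eq_rpow, ← Real.sqrt_eq_rpow]
  exact key
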